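/- For all integers m ≥ 1, the two representations of Binet's coefficients agree: (1/m)·∫_0^1 (u − 1/2)·u·∏_{k=1}^{m−1}(k−u) du = ((−1)^{m−1}/(2m))·∑_{k=1}^m k·S_m^{(k)}/((k+2)(k+1)), where S_m^{(k)} are the Stirling numbers of the first kind. -/

import Mathlib

open Finset Polynomial intervalIntegral


/-- The coefficients of Binet's second factorial series. -/
noncomputable def binetC (m : ℕ) : ℝ :=
  (1 / (m : ℝ)) * ∫ u in (0:ℝ)..1, (u - 1/2) * u * ∏ k ∈ Finset.Icc 1 (m - 1), ((k : ℝ) - u)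

/-- Signed Stirling numbers of the first kind, defined by
`∏_{i=0}^{m−1}(x − i) = ∑_{k=0}^m S_m^{(k)} x^k`. -/
noncomputable def stirlingFirst (m k : ℕ) : ℝ :=
  (∏ i ∈ Finset.range m, (Polynomial.X - Polynomial.C (i : ℝ))).coeff k

lemma prodEval (m : ℕ) (hm : 1 ≤ m) (u : ℝ) :
    u * ∏ k ∈ Finset.Icc 1 (m - 1), (u - (k : ℝ)) = ∏ i ∈ Finset.range m, (u - (i : ℝ)) := by
  obtain ⟨n, rfl⟩ := Nat.exists_eq_add_of_le hm
  simp only [Nat.add_sub_cancel_left]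
  rw [show 1 + n = n + 1 from add_comm 1 n, Finset.prod_range_succ',
    show Finset.Icc 1 n = Finset.Ico 1 (n+1) by rfl, Finset.prod_Ico_eq_prod_range]
  simp only [Nat.add_sub_cancel, Nat.cast_zero, sub_zero]
  rw [mul_comm]
  congr 1
  apply Finset.prod_congr rfl
  intro i _
  push_cast
  ring

lemma degLe (m : ℕ) :
    (∏ i ∈ Finset.range m, (Polynomial.X - Polynomial.C (i : ℝ))).natDegree ≤ m := by
  refine le_trans (Polynomial.natDegree_prod_le (Finset.range m)
    (fun i => Polynomial.X - Polynomial.C (i:ℝ))) ?_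
  refine le_of_eq ?_
  calc ∑ i ∈ Finset.range m, (Polynomial.X - Polynomial.C (i : ℝ)).natDegree
      = ∑ _i ∈ Finset.range m, 1 :=
        Finset.sum_congr rfl fun i _ => Polynomial.natDegree_X_sub_C _
    _ = m := by simp

lemma evalSum (m : ℕ) (u : ℝ) :
    ∏ i ∈ Finset.range m, (u - (i : ℝ)) = ∑ k ∈ Finset.range (m+1), stirlingFirst m k * u ^ k := by
  have h := Polynomial.eval_eq_sum_range' (Nat.lt_succ_of_le (degLe m)) u
  simpa [stirlingFirst, Polynomial.eval_prod] using h

lemma keyInt (k : ℕ) : (∫ u in (0:ℝ)..1, (u - 1/2) * u ^ k)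
    = (k : ℝ) / (2 * ((k : ℝ) + 1) * ((k : ℝ) + 2)) := by
  have : ∀ u : ℝ, (u - 1/2) * u ^ k = u ^ (k+1) - (1/2) * u ^ k := by
    intro u; ring
  simp only [this]
  rw [intervalIntegral.integral_sub (by exact (intervalIntegrable_pow _)) (by
      exact (intervalIntegrable_pow k).const_mul _),
    intervalIntegral.integral_const_mul, integral_pow, integral_pow]
  have h1 : ((k:ℝ) + 1) ≠ 0 := by positivity
  have h2 : ((k:ℝ) + 2) ≠ 0 := by positivity
  push_cast
  field_simp
  ring


theorem binetC_eq_stirling_sum (m : ℕ) (hm : 1 ≤ m) :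
    binetC m = ((-1 : ℝ) ^ (m - 1) / (2 * m)) *
      ∑ k ∈ Finset.Icc 1 m, (k : ℝ) * stirlingFirst m k / (((k : ℝ) + 2) * ((k : ℝ) + 1)) := by
  have hcard : (Finset.Icc 1 (m-1)).card = m - 1 := by
    simp [Nat.card_Icc]
  have hint : ∀ u : ℝ, (u - 1/2) * u * ∏ k ∈ Finset.Icc 1 (m - 1), ((k : ℝ) - u)
      = (-1 : ℝ) ^ (m-1) * ∑ k ∈ Finset.range (m+1), stirlingFirst m k * ((u - 1/2) * u ^ k) := by
    intro u
    have h1 : ∏ k ∈ Finset.Icc 1 (m - 1), ((k : ℝ) - u)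
        = (-1 : ℝ) ^ (m-1) * ∏ k ∈ Finset.Icc 1 (m - 1), (u - (k : ℝ)) := by
      calc ∏ k ∈ Finset.Icc 1 (m - 1), ((k : ℝ) - u)
          = ∏ k ∈ Finset.Icc 1 (m - 1), (-1) * (u - (k : ℝ)) := by
            apply Finset.prod_congr rfl; intro k _; ring
        _ = (-1 : ℝ) ^ (m-1) * ∏ k ∈ Finset.Icc 1 (m - 1), (u - (k : ℝ)) := by
            rw [Finset.prod_mul_distrib, Finset.prod_const, hcard]
    calc (u - 1/2) * u * ∏ k ∈ Finset.Icc 1 (m - 1), ((k : ℝ) - u)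
        = (-1:ℝ)^(m-1) * ((u - 1/2) * (u * ∏ k ∈ Finset.Icc 1 (m - 1), (u - (k : ℝ)))) := by
          rw [h1]; ring
      _ = (-1:ℝ)^(m-1) * ((u - 1/2) * ∑ k ∈ Finset.range (m+1), stirlingFirst m k * u ^ k) := by
          rw [prodEval m hm u, evalSum]
      _ = _ := by rw [Finset.mul_sum]; congr 1; apply Finset.sum_congr rfl; intro k _; ring
  have hI : (∫ u in (0:ℝ)..1, (u - 1/2) * u * ∏ k ∈ Finset.Icc 1 (m - 1), ((k : ℝ) - u))
      = (-1:ℝ)^(m-1) * ∑ k ∈ Finset.range (m+1), stirlingFirst m k *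
          ((k : ℝ) / (2 * ((k : ℝ) + 1) * ((k : ℝ) + 2))) := by
    simp only [hint]
    rw [intervalIntegral.integral_const_mul, intervalIntegral.integral_finset_sum]
    · congr 1
      apply Finset.sum_congr rfl
      intro k _
      rw [intervalIntegral.integral_const_mul, keyInt]
    · intro k _
      apply IntervalIntegrable.const_mul
      apply Continuous.intervalIntegrable
      continuity
  have hsum : ∑ k ∈ Finset.range (m+1), stirlingFirst m k *
        ((k : ℝ) / (2 * ((k : ℝ) + 1) * ((k : ℝ) + 2)))
      = ∑ k ∈ Finset.Icc 1 m, stirlingFirst m k *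
        ((k : ℝ) / (2 * ((k : ℝ) + 1) * ((k : ℝ) + 2))) := by
    refine (Finset.sum_subset ?_ ?_).symm
    · intro k hk
      simp only [Finset.mem_Icc, Finset.mem_range] at *
      omega
    · intro k hk hk'
      simp only [Finset.mem_Icc, Finset.mem_range] at hk hk'
      have : k = 0 := by omega
      subst this
      simp
  rw [binetC, hI, hsum, Finset.mul_sum, Finset.mul_sum, Finset.mul_sum]
  apply Finset.sum_congr rfl
  intro k hk
  have hm0 : (m:ℝ) ≠ 0 := by
    simp only [ne_eq, Nat.cast_eq_zero]; omega
  have h1 : ((k:ℝ) + 1) ≠ 0 := by positivity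
  have h2 : ((k:ℝ) + 2) ≠ 0 := by positivity
  field_simp
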